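/- With H^ess(p) = ∫_{|y|>ρ₀/2} e^{p·y} J(y) dy, there exist ε > 0 and c(J) > 0 such that for every p ∈ ℝ^N and every unit vector ν ∈ ℝ^N: ν^T D²H^ess(p) ν ≥ ε c(J) e^{ρ₀|p|/2}. -/

import Mathlib

open MeasureTheory Real Set Filter
open scoped RealInnerProductSpace

set_option maxHeartbeats 1000000 in
theorem stmt_5 {N : ℕ}
    (J : EuclideanSpace ℝ (Fin N) → ℝ) (ρ₀ : ℝ) (hρ₀ : 0 < ρ₀)
    (hJnn : ∀ y, 0 ≤ J y)
    (hJC1 : ContDiffOn ℝ 1 J {(0 : EuclideanSpace ℝ (Fin N))}ᶜ)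
    (hJcont : ContinuousOn J {(0 : EuclideanSpace ℝ (Fin N))}ᶜ)
    (hJpos : ∀ y ∈ Metric.ball (0 : EuclideanSpace ℝ (Fin N)) ρ₀ \ {0}, 0 < J y)
    (hint : Integrable (fun y => min 1 (‖y‖ ^ 2) * J y))
    (hexp : ∀ β > (0:ℝ), IntegrableOn (fun y => Real.exp (β * ‖y‖) * J y)
      {y : EuclideanSpace ℝ (Fin N) | ρ₀ / 2 < ‖y‖}) :
    ∃ ε > (0:ℝ), ∃ c > (0:ℝ),
      ∀ (p ν : EuclideanSpace ℝ (Fin N)), ‖ν‖ = 1 →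
        ε * c * Real.exp (ρ₀ * ‖p‖ / 2) ≤
          ∫ y in {y : EuclideanSpace ℝ (Fin N) | ρ₀ / 2 < ‖y‖},
            ⟪y, ν⟫ ^ 2 * Real.exp ⟪p, y⟫ * J y := by
  classical
  rcases Nat.eq_zero_or_pos N with hN | hN
  · refine ⟨1, one_pos, 1, one_pos, fun p ν hν => absurd hν ?_⟩
    subst hN
    have : ν = 0 := Subsingleton.elim _ _
    simp [this]
  -- main case
  haveI : Nonempty (Fin N) := ⟨⟨0, hN⟩⟩
  haveI : Nontrivial (EuclideanSpace ℝ (Fin N)) := inferInstance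
  obtain ⟨e, he⟩ := exists_norm_eq (EuclideanSpace ℝ (Fin N)) (zero_le_one)
  set a : ℝ := 3 / 4 * ρ₀ with ha_def
  set b : ℝ := ρ₀ / 8 with hb_def
  set r : ℝ := ρ₀ / 16 with hr_def
  have hr : 0 < r := by positivity
  have hb : 0 < b := by positivity
  -- compact annulus
  set K : Set (EuclideanSpace ℝ (Fin N)) :=
    Metric.closedBall 0 (15 / 16 * ρ₀) \ Metric.ball 0 (11 / 16 * ρ₀) with hK_def
  have hK_mem : ∀ y, y ∈ K ↔ 11 / 16 * ρ₀ ≤ ‖y‖ ∧ ‖y‖ ≤ 15 / 16 * ρ₀ := by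
    intro y
    simp only [hK_def, Set.mem_diff, Metric.mem_closedBall, Metric.mem_ball,
      dist_zero_right, not_lt]
    tauto
  have hK_cpt : IsCompact K :=
    (isCompact_closedBall _ _).diff Metric.isOpen_ball
  have hK_sub : K ⊆ {(0 : EuclideanSpace ℝ (Fin N))}ᶜ := by
    intro y hy
    rw [hK_mem] at hy
    simp only [Set.mem_compl_iff, Set.mem_singleton_iff]
    intro h0
    rw [h0, norm_zero] at hy
    nlinarith [hy.1]
  have hK_ne : K.Nonempty := by
    refine ⟨(11 / 16 * ρ₀) • e, ?_⟩
    rw [hK_mem, norm_smul, he, mul_one, Real.norm_eq_abs, abs_of_pos (by positivity)]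
    constructor <;> nlinarith
  obtain ⟨z, hzK, hz⟩ := hK_cpt.exists_isMinOn hK_ne (hJcont.mono hK_sub)
  have hm : 0 < J z := by
    apply hJpos
    rw [hK_mem] at hzK
    constructor
    · rw [Metric.mem_ball, dist_zero_right]; nlinarith [hzK.2]
    · simp only [Set.mem_singleton_iff]
      intro h0; rw [h0, norm_zero] at hzK; nlinarith [hzK.1]
  set vol : ℝ := (volume (Metric.ball (0 : EuclideanSpace ℝ (Fin N)) r)).toReal with hvol_def
  have hvol : 0 < vol := by
    rw [hvol_def]
    exact ENNReal.toReal_pos (Metric.measure_ball_pos _ _ hr).ne' measure_ball_lt_top.ne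
  refine ⟨(ρ₀ / 16) ^ 2, by positivity, J z * vol, by positivity, fun p ν hν => ?_⟩
  set S : Set (EuclideanSpace ℝ (Fin N)) := {y | ρ₀ / 2 < ‖y‖} with hS_def
  have hS_open : IsOpen S := isOpen_lt continuous_const continuous_norm
  have hS_meas : MeasurableSet S := hS_open.measurableSet
  have hS_sub : S ⊆ {(0 : EuclideanSpace ℝ (Fin N))}ᶜ := by
    intro y hy
    simp only [Set.mem_compl_iff, Set.mem_singleton_iff]
    intro h0
    rw [hS_def, Set.mem_setOf_eq, h0, norm_zero] at hy
    linarith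
  set f : EuclideanSpace ℝ (Fin N) → ℝ :=
    fun y => ⟪y, ν⟫ ^ 2 * Real.exp ⟪p, y⟫ * J y with hf_def
  -- integrability of f on S
  have hfS : IntegrableOn f S := by
    have hg : IntegrableOn (fun y => Real.exp ((‖p‖ + 2) * ‖y‖) * J y) S :=
      hexp (‖p‖ + 2) (by positivity)
    refine Integrable.mono' hg ?_ ?_
    · refine ContinuousOn.aestronglyMeasurable ?_ hS_meas
      exact (((continuous_inner.comp (continuous_id.prodMk continuous_const)).pow 2).mul
        ((continuous_inner.comp (continuous_const.prodMk continuous_id)).rexp)).continuousOn.mul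
        (hJcont.mono hS_sub)
    · rw [ae_restrict_iff' hS_meas]
      refine ae_of_all _ fun y hy => ?_
      have hy0 : (0:ℝ) ≤ ‖y‖ := norm_nonneg _
      have h1 : ⟪y, ν⟫ ^ 2 ≤ ‖y‖ ^ 2 := by
        have := abs_real_inner_le_norm y ν
        rw [hν, mul_one] at this
        calc ⟪y, ν⟫ ^ 2 = |⟪y, ν⟫| ^ 2 := (sq_abs _).symm
          _ ≤ ‖y‖ ^ 2 := pow_le_pow_left₀ (abs_nonneg _) this 2
      have h2 : ‖y‖ ^ 2 ≤ Real.exp (2 * ‖y‖) := by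
        have h3 : ‖y‖ ≤ Real.exp ‖y‖ := (Real.add_one_le_exp ‖y‖).trans' (by linarith)
        calc ‖y‖ ^ 2 ≤ Real.exp ‖y‖ * Real.exp ‖y‖ := by nlinarith
          _ = Real.exp (2 * ‖y‖) := by rw [two_mul, Real.exp_add]
      have h4 : ⟪p, y⟫ ≤ ‖p‖ * ‖y‖ := real_inner_le_norm p y
      have hfnn : 0 ≤ f y := by
        have := hJnn y
        have := Real.exp_pos ⟪p, y⟫
        positivity
      rw [Real.norm_eq_abs, abs_of_nonneg hfnn]
      calc f y ≤ ‖y‖ ^ 2 * Real.exp (‖p‖ * ‖y‖) * J y := by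
            apply mul_le_mul_of_nonneg_right _ (hJnn y)
            exact mul_le_mul h1 (Real.exp_le_exp.2 h4) (Real.exp_pos _).le (by positivity)
        _ ≤ Real.exp (2 * ‖y‖) * Real.exp (‖p‖ * ‖y‖) * J y := by
            apply mul_le_mul_of_nonneg_right _ (hJnn y)
            exact mul_le_mul_of_nonneg_right h2 (Real.exp_pos _).le
        _ = Real.exp ((‖p‖ + 2) * ‖y‖) * J y := by rw [← Real.exp_add]; ring_nf
  -- nonnegativity of f
  have hfnn : ∀ y, 0 ≤ f y := fun y => by
    have := hJnn y
    have := Real.exp_pos ⟪p, y⟫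
    positivity
  -- the unit vector u with ⟪p, u⟫ = ‖p‖
  set u : EuclideanSpace ℝ (Fin N) := if p = 0 then e else ‖p‖⁻¹ • p with hu_def
  have hu_norm : ‖u‖ = 1 := by
    rw [hu_def]
    split_ifs with hp
    · exact he
    · rw [norm_smul, norm_inv, norm_norm, inv_mul_cancel₀ (norm_ne_zero_iff.2 hp)]
  have hup : ⟪p, u⟫ = ‖p‖ := by
    rw [hu_def]
    split_ifs with hp
    · simp [hp]
    · rw [real_inner_smul_right, real_inner_self_eq_norm_mul_norm,
        inv_mul_cancel_left₀ (norm_ne_zero_iff.2 hp)]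
  have hpnu : ⟪p, ν⟫ = ‖p‖ * ⟪u, ν⟫ := by
    rw [hu_def]
    split_ifs with hp
    · simp [hp]
    · rw [real_inner_smul_left, ← mul_assoc, mul_inv_cancel₀ (norm_ne_zero_iff.2 hp), one_mul]
  set s : ℝ := if 0 ≤ ⟪u, ν⟫ then 1 else -1 with hs_def
  have hs_sq : s * s = 1 := by rw [hs_def]; split_ifs <;> norm_num
  have hs_abs : |s| = 1 := by rw [hs_def]; split_ifs <;> norm_num
  have hs_nn : 0 ≤ s * ⟪u, ν⟫ := by
    rw [hs_def]; split_ifs with h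
    · linarith
    · nlinarith [lt_of_not_ge h]
  set y₀ : EuclideanSpace ℝ (Fin N) := a • u + (s * b) • ν with hy0_def
  have hinner_y0_u : ⟪y₀, u⟫ = a + b * (s * ⟪u, ν⟫) := by
    rw [hy0_def, inner_add_left, real_inner_smul_left, real_inner_smul_left,
      real_inner_self_eq_norm_mul_norm, hu_norm, real_inner_comm]
    ring
  have hy0_norm_lb : a ≤ ‖y₀‖ := by
    have h1 : ⟪y₀, u⟫ ≤ ‖y₀‖ * ‖u‖ := real_inner_le_norm _ _
    rw [hu_norm, mul_one] at h1
    rw [hinner_y0_u] at h1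
    nlinarith
  have hy0_norm_ub : ‖y₀‖ ≤ a + b := by
    have h1 : ‖a • u‖ = a := by
      rw [norm_smul, hu_norm, mul_one, Real.norm_eq_abs, abs_of_pos (by positivity)]
    have h2 : ‖(s * b) • ν‖ = b := by
      rw [norm_smul, hν, mul_one, Real.norm_eq_abs, abs_mul, hs_abs, one_mul, abs_of_pos hb]
    calc ‖y₀‖ ≤ ‖a • u‖ + ‖(s * b) • ν‖ := norm_add_le _ _
      _ = a + b := by rw [h1, h2]
  -- properties of points in the ball
  have hball : ∀ y ∈ Metric.ball y₀ r,
      (ρ₀ / 16) ^ 2 ≤ ⟪y, ν⟫ ^ 2 ∧ ρ₀ * ‖p‖ / 2 ≤ ⟪p, y⟫ ∧ y ∈ K ∧ y ∈ S := by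
    intro y hy
    rw [Metric.mem_ball, dist_eq_norm] at hy
    have hdiff : ‖y - y₀‖ < r := hy
    have hnorm_lb : a - r ≤ ‖y‖ := by
      have h := norm_sub_norm_le y₀ y
      have h' : ‖y₀ - y‖ < r := by rw [norm_sub_rev]; exact hdiff
      linarith
    have hnorm_ub : ‖y‖ ≤ a + b + r := by
      have h := norm_sub_norm_le y y₀
      linarith
    refine ⟨?_, ?_, ?_, ?_⟩
    · -- inner product with ν squared
      have hiy0 : b ≤ s * ⟪y₀, ν⟫ := by
        have : ⟪y₀, ν⟫ = a * ⟪u, ν⟫ + s * b := by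
          rw [hy0_def, inner_add_left, real_inner_smul_left, real_inner_smul_left,
            real_inner_self_eq_norm_mul_norm, hν]
          ring
        rw [this]
        have ha' : (0:ℝ) < a := by positivity
        nlinarith
      have habs0 : b ≤ |⟪y₀, ν⟫| := by
        calc b ≤ s * ⟪y₀, ν⟫ := hiy0
          _ ≤ |s * ⟪y₀, ν⟫| := le_abs_self _
          _ = |⟪y₀, ν⟫| := by rw [abs_mul, hs_abs, one_mul]
      have hdi : |⟪y - y₀, ν⟫| ≤ r := by
        have := abs_real_inner_le_norm (y - y₀) ν
        rw [hν, mul_one] at this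
        linarith
      have habs : b - r ≤ |⟪y, ν⟫| := by
        have h5 : ⟪y, ν⟫ = ⟪y₀, ν⟫ + ⟪y - y₀, ν⟫ := by
          rw [← inner_add_left]; congr 1; abel
        have h6 := abs_sub_abs_le_abs_sub ⟪y₀, ν⟫ (-⟪y - y₀, ν⟫)
        rw [abs_neg, sub_neg_eq_add, ← h5] at h6
        linarith
      have hbr : b - r = ρ₀ / 16 := by rw [hb_def, hr_def]; ring
      calc (ρ₀ / 16) ^ 2 ≤ |⟪y, ν⟫| ^ 2 :=
            pow_le_pow_left₀ (by positivity) (by rw [← hbr]; exact habs) 2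
        _ = ⟪y, ν⟫ ^ 2 := sq_abs _
    · -- inner product with p
      have hpy0 : a * ‖p‖ ≤ ⟪p, y₀⟫ := by
        have : ⟪p, y₀⟫ = a * ‖p‖ + b * ‖p‖ * (s * ⟪u, ν⟫) := by
          rw [hy0_def, inner_add_right, real_inner_smul_right, real_inner_smul_right,
            hup, hpnu]
          ring
        rw [this]
        have hnn : 0 ≤ b * ‖p‖ * (s * ⟪u, ν⟫) :=
          mul_nonneg (mul_nonneg hb.le (norm_nonneg p)) hs_nn
        linarith
      have hpd : |⟪p, y - y₀⟫| ≤ ‖p‖ * r := by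
        have := abs_real_inner_le_norm p (y - y₀)
        nlinarith [norm_nonneg p]
      have h5 : ⟪p, y⟫ = ⟪p, y₀⟫ + ⟪p, y - y₀⟫ := by
        rw [← inner_add_right]; congr 1; abel
      have h6 : -( ‖p‖ * r) ≤ ⟪p, y - y₀⟫ := neg_le_of_abs_le hpd
      have hra : ρ₀ / 2 ≤ a - r := by rw [ha_def, hr_def]; nlinarith
      have : (a - r) * ‖p‖ ≤ ⟪p, y⟫ := by rw [h5]; nlinarith
      nlinarith [norm_nonneg p, mul_le_mul_of_nonneg_right hra (norm_nonneg p)]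
    · rw [hK_mem]
      constructor
      · rw [ha_def, hr_def] at hnorm_lb; nlinarith
      · rw [ha_def, hb_def, hr_def] at hnorm_ub; nlinarith
    · rw [hS_def, Set.mem_setOf_eq]
      rw [ha_def, hr_def] at hnorm_lb; nlinarith
  have hball_sub : Metric.ball y₀ r ⊆ S := fun y hy => (hball y hy).2.2.2
  -- lower bound on the ball
  have hlow : ∀ y ∈ Metric.ball y₀ r,
      (ρ₀ / 16) ^ 2 * Real.exp (ρ₀ * ‖p‖ / 2) * J z ≤ f y := by
    intro y hy
    obtain ⟨h1, h2, h3, _⟩ := hball y hy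
    have h4 : J z ≤ J y := hz h3
    have h5 : Real.exp (ρ₀ * ‖p‖ / 2) ≤ Real.exp ⟪p, y⟫ := Real.exp_le_exp.2 h2
    calc (ρ₀ / 16) ^ 2 * Real.exp (ρ₀ * ‖p‖ / 2) * J z
        ≤ ⟪y, ν⟫ ^ 2 * Real.exp ⟪p, y⟫ * J y := by
          apply mul_le_mul _ h4 hm.le (by positivity)
          exact mul_le_mul h1 h5 (Real.exp_pos _).le (by positivity)
      _ = f y := rfl
  -- put it together
  have key1 : ((ρ₀ / 16) ^ 2 * Real.exp (ρ₀ * ‖p‖ / 2) * J z) *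
      (volume (Metric.ball y₀ r)).toReal ≤ ∫ y in Metric.ball y₀ r, f y :=
    setIntegral_ge_of_const_le_real measurableSet_ball measure_ball_lt_top.ne
      hlow (hfS.mono_set hball_sub)
  have key2 : ∫ y in Metric.ball y₀ r, f y ≤ ∫ y in S, f y := by
    apply setIntegral_mono_set hfS
    · exact ae_of_all _ hfnn
    · exact HasSubset.Subset.eventuallyLE hball_sub
  have hvol_eq : (volume (Metric.ball y₀ r)).toReal = vol := by
    rw [hvol_def, Measure.addHaar_ball_center]
  rw [hvol_eq] at key1
  calc (ρ₀ / 16) ^ 2 * (J z * vol) * Real.exp (ρ₀ * ‖p‖ / 2)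
      = ((ρ₀ / 16) ^ 2 * Real.exp (ρ₀ * ‖p‖ / 2) * J z) * vol := by ring
    _ ≤ ∫ y in Metric.ball y₀ r, f y := key1
    _ ≤ ∫ y in S, f y := key2
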